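/- arXiv:2602.00963 — 4 statements merged into one kernel-verified Lean document; each statement's English description precedes it below -/
import Mathlib

section
/- Let G be a graph of order n ≥ k+2 with n ≡ k (mod 2) that is k-critical with respect to [1,b]-odd factors (i.e., for every X ⊆ V(G) with |X| = k, G - X has a spanning subgraph H with d_H(v) ∈ {1,3,...,b} for all v). Then G is k-connected. -/
open SimpleGraph

/-- Degree of `v` in `H` (instance-free). -/
noncomputable def degN {V : Type*} (H : SimpleGraph V) (v : V) : ℕ :=
  Nat.card {u // H.Adj v u}

/-- `G` has a spanning subgraph in which every vertex has odd degree at most `b`. -/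
def HasOddFactor {V : Type*} (G : SimpleGraph V) (b : ℕ) : Prop :=
  ∃ H ≤ G, ∀ v, Odd (degN H v) ∧ degN H v ≤ b

/-- `G` is `k`-critical w.r.t. `[1,b]`-odd factors. -/
def KCriticalOdd {V : Type*} [Fintype V] [DecidableEq V]
    (G : SimpleGraph V) (k b : ℕ) : Prop :=
  ∀ X : Finset V, X.card = k → HasOddFactor (G.induce ((Xᶜ : Finset V) : Set V)) b

/-- `G` is `k`-connected. -/
def KConnected {V : Type*} [Fintype V] [DecidableEq V]
    (G : SimpleGraph V) (k : ℕ) : Prop :=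
  k < Fintype.card V ∧
    ∀ X : Finset V, X.card < k → (G.induce ((Xᶜ : Finset V) : Set V)).Connected

/-- In a graph where every vertex has odd `degN`, any set closed under adjacency
has even cardinality. -/
lemma even_card_closed {T : Type*} [Fintype T] (H : SimpleGraph T) (S : Finset T)
    (hodd : ∀ v, Odd (degN H v))
    (hcl : ∀ v ∈ S, ∀ w, H.Adj v w → w ∈ S) : Even S.card := by
  classical
  let H' : SimpleGraph (S : Set T) := H.induce (S : Set T)
  have hdeg : ∀ v : (S : Set T), degN H' v = degN H (v : T) := by
    intro v
    refine Nat.card_congr ⟨fun w => ⟨(w : T), by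
        have := w.prop; rwa [comap_adj] at this⟩,
      fun w => ⟨⟨(w : T), by
        exact Finset.mem_coe.mpr (hcl v (Finset.mem_coe.mp v.prop) w w.prop)⟩, by
        rw [comap_adj]; exact w.prop⟩, ?_, ?_⟩
    · intro w; rfl
    · intro w; rfl
  have hdeg' : ∀ v : (S : Set T), H'.degree v = degN H' v := by
    intro v
    rw [degN, ← SimpleGraph.card_neighborSet_eq_degree, ← Nat.card_eq_fintype_card]
    rfl
  have h := H'.even_card_odd_degree_vertices
  have hall : ({v | Odd (H'.degree v)} : Finset (S : Set T)) = Finset.univ := by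
    ext v
    simp only [Finset.mem_filter, Finset.mem_univ, true_and]
    rw [hdeg', hdeg]
    exact ⟨fun _ => trivial, fun _ => hodd _⟩
  rw [hall] at h
  simpa [Finset.card_univ] using h

theorem stmt_2 {V : Type*} [Fintype V] [DecidableEq V] (G : SimpleGraph V)
    (b k : ℕ) (hb : 0 < b) (hbodd : b % 2 = 1) (hk : 0 < k)
    (hcard : k + 2 ≤ Fintype.card V) (hpar : Fintype.card V % 2 = k % 2)
    (hcrit : KCriticalOdd G k b) :
    KConnected G k := by
  classical
  refine ⟨by omega, ?_⟩
  intro X hX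
  by_contra hncon
  have hXc : (Xᶜ : Finset V).card = Fintype.card V - X.card := by
    simp [Finset.card_compl]
  have hXle : X.card ≤ Fintype.card V := Finset.card_le_univ X
  -- Xᶜ nonempty
  obtain ⟨x, hx⟩ : (Xᶜ : Finset V).Nonempty := Finset.card_pos.mp (by omega)
  have hnonempty : Nonempty ((Xᶜ : Finset V) : Set V) := ⟨⟨x, by simpa using hx⟩⟩
  set G' := G.induce ((Xᶜ : Finset V) : Set V) with hG'
  have hpc : ¬ G'.Preconnected := fun hp =>
    hncon ((SimpleGraph.connected_iff G').mpr ⟨hp, hnonempty⟩)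
  rw [SimpleGraph.Preconnected] at hpc
  push_neg at hpc
  obtain ⟨u, v, huv⟩ := hpc
  -- the component of u, as a Finset of V
  set C : Finset V :=
    (Finset.univ.filter fun w : ((Xᶜ : Finset V) : Set V) => G'.Reachable u w).image
      Subtype.val with hC
  have hCsub : C ⊆ (Xᶜ : Finset V) := by
    intro w hw
    rw [hC, Finset.mem_image] at hw
    obtain ⟨a, _, rfl⟩ := hw
    exact Finset.mem_coe.mp a.prop
  have huC : (u : V) ∈ C := by
    rw [hC, Finset.mem_image]
    exact ⟨u, Finset.mem_filter.mpr ⟨Finset.mem_univ _, Reachable.refl _⟩, rfl⟩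
  have hvC : (v : V) ∉ C := by
    intro hmem
    rw [hC, Finset.mem_image] at hmem
    obtain ⟨a, ha, hav⟩ := hmem
    have := (Finset.mem_filter.mp ha).2
    exact huv (by rwa [show a = v from Subtype.ext hav] at this)
  have hvXc : (v : V) ∈ (Xᶜ : Finset V) := Finset.mem_coe.mp v.prop
  -- closure of C under adjacency within Xᶜ
  have hCl : ∀ a ∈ C, ∀ b ∈ (Xᶜ : Finset V), G.Adj a b → b ∈ C := by
    intro a ha b hb hadj
    rw [hC, Finset.mem_image] at ha ⊢
    obtain ⟨a', ha', rfl⟩ := ha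
    have hra : G'.Reachable u a' := (Finset.mem_filter.mp ha').2
    have hadj' : G'.Adj a' ⟨b, by simpa using hb⟩ := by
      rw [hG', comap_adj]; exact hadj
    exact ⟨⟨b, by simpa using hb⟩,
      Finset.mem_filter.mpr ⟨Finset.mem_univ _, hra.trans hadj'.reachable⟩, rfl⟩
  set D : Finset V := (Xᶜ : Finset V) \ C with hD
  have hvD : (v : V) ∈ D := Finset.mem_sdiff.mpr ⟨hvXc, hvC⟩
  have hsum : D.card + C.card = (Xᶜ : Finset V).card :=
    Finset.card_sdiff_add_card_eq_card hCsub
  have hC1 : 1 ≤ C.card := Finset.card_pos.mpr ⟨_, huC⟩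
  have hD1 : 1 ≤ D.card := Finset.card_pos.mpr ⟨_, hvD⟩
  set r := k - X.card with hr
  -- choose s
  obtain ⟨s, hs1, hs2, hs3, hs4⟩ :
      ∃ s, s ≤ C.card ∧ s ≤ r ∧ r - s ≤ D.card ∧ (C.card - s) % 2 = 1 := by
    by_cases hp : (C.card - (r - D.card)) % 2 = 1
    · exact ⟨r - D.card, by omega, by omega, by omega, hp⟩
    · exact ⟨r - D.card + 1, by omega, by omega, by omega, by omega⟩
  obtain ⟨Y1, hY1C, hY1card⟩ := Finset.exists_subset_card_eq hs1
  obtain ⟨Y2, hY2D, hY2card⟩ := Finset.exists_subset_card_eq (hs3 : r - s ≤ D.card)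
  set X' : Finset V := X ∪ (Y1 ∪ Y2) with hX'
  have hY1X : Disjoint Y1 X := by
    refine Finset.disjoint_left.mpr fun a ha hax => ?_
    exact (Finset.mem_compl.mp (hCsub (hY1C ha))) hax
  have hY2X : Disjoint Y2 X := by
    refine Finset.disjoint_left.mpr fun a ha hax => ?_
    exact (Finset.mem_compl.mp (Finset.mem_sdiff.mp (hY2D ha)).1) hax
  have hY12 : Disjoint Y1 Y2 := by
    refine Finset.disjoint_left.mpr fun a ha ha2 => ?_
    exact (Finset.mem_sdiff.mp (hY2D ha2)).2 (hY1C ha)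
  have hX'card : X'.card = k := by
    rw [hX', Finset.card_union_of_disjoint (by
      rw [Finset.disjoint_union_right]
      exact ⟨hY1X.symm, hY2X.symm⟩),
      Finset.card_union_of_disjoint hY12, hY1card, hY2card]
    omega
  obtain ⟨H, hle, hH⟩ := hcrit X' hX'card
  have hX'sub : (X'ᶜ : Finset V) ⊆ (Xᶜ : Finset V) :=
    Finset.compl_subset_compl.mpr (Finset.subset_union_left)
  set S : Finset ((X'ᶜ : Finset V) : Set V) :=
    Finset.univ.filter (fun w => (w : V) ∈ C) with hS
  have heven : Even S.card := by
    refine even_card_closed H S (fun v => (hH v).1) ?_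
    intro a ha w hadj
    have haC : (a : V) ∈ C := (Finset.mem_filter.mp ha).2
    have hadjG : G.Adj (a : V) (w : V) := by
      have := hle hadj
      rwa [comap_adj] at this
    have hwXc : (w : V) ∈ (Xᶜ : Finset V) := hX'sub (Finset.mem_coe.mp w.prop)
    exact Finset.mem_filter.mpr ⟨Finset.mem_univ _, hCl _ haC _ hwXc hadjG⟩
  -- compute S.card
  have hScard : S.card = ((X'ᶜ : Finset V) ∩ C).card := by
    refine Finset.card_bij (fun a _ => (a : V)) ?_ ?_ ?_
    · intro a ha
      exact Finset.mem_inter.mpr ⟨Finset.mem_coe.mp a.prop, (Finset.mem_filter.mp ha).2⟩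
    · intro a _ b _ hab
      exact Subtype.ext hab
    · intro b hb
      have hb' := Finset.mem_inter.mp hb
      exact ⟨⟨b, by simpa using hb'.1⟩,
        Finset.mem_filter.mpr ⟨Finset.mem_univ _, hb'.2⟩, rfl⟩
  have hinter : (X'ᶜ : Finset V) ∩ C = C \ Y1 := by
    ext w
    simp only [Finset.mem_inter, Finset.mem_compl, hX', Finset.mem_union, Finset.mem_sdiff]
    constructor
    · rintro ⟨hw, hwC⟩
      push_neg at hw
      exact ⟨hwC, hw.2.1⟩
    · rintro ⟨hwC, hwY1⟩
      refine ⟨?_, hwC⟩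
      push_neg
      refine ⟨Finset.mem_compl.mp (hCsub hwC), hwY1, fun h2 => ?_⟩
      exact (Finset.mem_sdiff.mp (hY2D h2)).2 hwC
  have hfinal : S.card = C.card - s := by
    rw [hScard, hinter, Finset.card_sdiff_of_subset hY1C, hY1card]
  rw [hfinal, Nat.even_iff] at heven
  omega
end

section
/- Let G be a connected graph and e an edge of G such that G - e is connected. Then the distance signless Laplacian spectral radius satisfies η₁(G - e) > η₁(G). -/
set_option linter.unusedSectionVars false
set_option maxHeartbeats 1000000

open SimpleGraph
open scoped Matrix

/-- Largest real eigenvalue (for symmetric matrices) as the sup of the real spectrum. -/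
noncomputable def maxEig {n : Type*} [Fintype n] [DecidableEq n] (M : Matrix n n ℝ) : ℝ :=
  sSup (spectrum ℝ M)

/-- The distance matrix of a graph. -/
noncomputable def distMatrix {V : Type*} [Fintype V] (G : SimpleGraph V) : Matrix V V ℝ :=
  Matrix.of fun i j => (G.dist i j : ℝ)

/-- The transmission of a vertex: the sum of distances to all vertices. -/
noncomputable def transmission {V : Type*} [Fintype V] (G : SimpleGraph V) (v : V) : ℕ :=
  ∑ u, G.dist v u

/-- The distance signless Laplacian matrix `Tr(G) + D(G)`. -/
noncomputable def qdMatrix {V : Type*} [Fintype V] [DecidableEq V]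
    (G : SimpleGraph V) : Matrix V V ℝ :=
  Matrix.diagonal (fun v => (transmission G v : ℝ)) + distMatrix G

section LinAlg
variable {n : Type*} [Fintype n] [DecidableEq n]

lemma dot_mulVec_expand (M : Matrix n n ℝ) (y : n → ℝ) :
    y ⬝ᵥ (M *ᵥ y) = ∑ i, ∑ j, M i j * y i * y j := by
  simp only [dotProduct, Matrix.mulVec, dotProduct, Finset.mul_sum]
  congr 1; ext i; congr 1; ext j; ring

lemma rayleigh_le {M : Matrix n n ℝ} (hM : M.IsHermitian) {μ : ℝ}
    (hμ : ∀ i, hM.eigenvalues i ≤ μ) (y : n → ℝ) :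
    y ⬝ᵥ (M *ᵥ y) ≤ μ * (y ⬝ᵥ y) := by
  set U : Matrix n n ℝ := (hM.eigenvectorUnitary : Matrix n n ℝ) with hUdef
  have hU1 : U * star U = 1 := Matrix.mem_unitaryGroup_iff.mp hM.eigenvectorUnitary.2
  have hstar : star U = Uᵀ := by
    rw [Matrix.star_eq_conjTranspose, Matrix.conjTranspose_eq_transpose_of_trivial]
  let z : n → ℝ := Uᵀ *ᵥ y
  have hz : z = Uᵀ *ᵥ y := rfl
  have hspec : M = U * Matrix.diagonal hM.eigenvalues * Uᵀ := by
    have := hM.spectral_theorem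
    simp only [Unitary.conjStarAlgAut_apply, Unitary.coe_star, ← hUdef, hstar] at this
    simpa using this
  have h1 : y ⬝ᵥ (M *ᵥ y) = z ⬝ᵥ (Matrix.diagonal hM.eigenvalues *ᵥ z) := by
    conv_lhs => rw [hspec]
    rw [← Matrix.mulVec_mulVec, ← Matrix.mulVec_mulVec, Matrix.dotProduct_mulVec y U,
      ← Matrix.mulVec_transpose, hz]
  have h2 : z ⬝ᵥ z = y ⬝ᵥ y := by
    rw [hz, Matrix.dotProduct_mulVec, Matrix.vecMul_transpose, Matrix.mulVec_mulVec, ← hstar,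
      hU1, Matrix.one_mulVec]
  have h3 : z ⬝ᵥ (Matrix.diagonal hM.eigenvalues *ᵥ z) = ∑ i, hM.eigenvalues i * (z i)^2 := by
    simp [dotProduct, Matrix.mulVec_diagonal]
    congr 1; ext i; ring
  rw [h1, h3, ← h2]
  have h4 : z ⬝ᵥ z = ∑ i, (z i)^2 := by simp [dotProduct, sq]
  rw [h4, Finset.mul_sum]
  exact Finset.sum_le_sum fun i _ => mul_le_mul_of_nonneg_right (hμ i) (sq_nonneg _)

lemma maxEig_spec {M : Matrix n n ℝ} (hM : M.IsHermitian) [Nonempty n] :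
    (∃ i, hM.eigenvalues i = maxEig M) ∧ ∀ j, hM.eigenvalues j ≤ maxEig M := by
  have hs : spectrum ℝ M = Set.range hM.eigenvalues := hM.spectrum_real_eq_range_eigenvalues
  have hfin : (Set.range hM.eigenvalues).Finite := Set.finite_range _
  have hne : (Set.range hM.eigenvalues).Nonempty := Set.range_nonempty _
  constructor
  · have := hne.csSup_mem hfin
    rw [maxEig, hs]
    exact this.imp fun i h => h
  · intro j
    rw [maxEig, hs]
    exact le_csSup hfin.bddAbove ⟨j, rfl⟩

end LinAlg

section GraphFacts
variable {V : Type*} [Fintype V] [DecidableEq V]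

lemma qdMatrix_apply (G : SimpleGraph V) (i j : V) :
    qdMatrix G i j = (if i = j then (transmission G i : ℝ) else 0) + (G.dist i j : ℝ) := by
  simp [qdMatrix, distMatrix, Matrix.add_apply, Matrix.diagonal_apply]

lemma qdMatrix_isHermitian (G : SimpleGraph V) : (qdMatrix G).IsHermitian := by
  ext i j
  simp only [Matrix.conjTranspose_apply, star_trivial, qdMatrix_apply]
  rw [SimpleGraph.dist_comm]
  by_cases h : i = j
  · subst h; simp
  · simp [h, Ne.symm h]

lemma qdMatrix_nonneg (G : SimpleGraph V) (i j : V) : 0 ≤ qdMatrix G i j := by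
  rw [qdMatrix_apply]
  positivity

end GraphFacts

theorem stmt_5 {V : Type*} [Fintype V] [DecidableEq V] (G : SimpleGraph V)
    (hG : G.Connected) (e : Sym2 V) (he : e ∈ G.edgeSet)
    (hconn : (G.deleteEdges {e}).Connected) :
    maxEig (qdMatrix G) < maxEig (qdMatrix (G.deleteEdges {e})) := by
  revert he hconn
  refine Sym2.ind (fun u v => ?_) e
  intro he hconn
  set G' := G.deleteEdges {s(u, v)} with hG'
  have hadj : G.Adj u v := he
  have hne : u ≠ v := hadj.ne
  haveI : Nonempty V := ⟨u⟩
  have hGle : G' ≤ G := SimpleGraph.deleteEdges_le _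
  have hd : ∀ a b, G.dist a b ≤ G'.dist a b := fun a b =>
    SimpleGraph.Reachable.dist_anti hGle (hconn.preconnected a b)
  have htr : ∀ w, transmission G w ≤ transmission G' w := fun w =>
    Finset.sum_le_sum fun x _ => hd w x
  have hdist1 : G.dist u v = 1 := SimpleGraph.dist_eq_one_iff_adj.mpr hadj
  have hd'pos : 0 < G'.dist u v := hconn.pos_dist_of_ne hne
  have hd'2 : 2 ≤ G'.dist u v := by
    have h1 : G'.dist u v ≠ 1 := by
      intro h
      have hA : G'.Adj u v := SimpleGraph.dist_eq_one_iff_adj.mp h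
      rw [hG', SimpleGraph.deleteEdges_adj] at hA
      exact hA.2 rfl
    omega
  set Q := qdMatrix G with hQdef
  set Q' := qdMatrix G' with hQ'def
  have hQh : Q.IsHermitian := qdMatrix_isHermitian G
  have hQ'h : Q'.IsHermitian := qdMatrix_isHermitian G'
  obtain ⟨⟨i₀, hi₀⟩, hall⟩ := maxEig_spec hQh
  obtain ⟨-, hall'⟩ := maxEig_spec hQ'h
  set μ := maxEig Q with hμdef
  set x : V → ℝ := ⇑(hQh.eigenvectorBasis i₀) with hxdef
  have hxeig : Q *ᵥ x = μ • x := by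
    rw [← hi₀]; exact hQh.mulVec_eigenvectorBasis i₀
  have hxx : x ⬝ᵥ x = 1 := by
    have hnorm : ‖hQh.eigenvectorBasis i₀‖ = 1 := hQh.eigenvectorBasis.orthonormal.1 i₀
    have hinner : (x ⬝ᵥ x) = inner ℝ (hQh.eigenvectorBasis i₀) (hQh.eigenvectorBasis i₀) := by
      rw [EuclideanSpace.inner_eq_star_dotProduct, star_trivial]
    rw [hinner, real_inner_self_eq_norm_mul_norm, hnorm, mul_one]
  set y : V → ℝ := fun i => |x i| with hydef
  have hyy : y ⬝ᵥ y = 1 := by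
    rw [← hxx]
    simp only [dotProduct, hydef, abs_mul_abs_self]
  have hxQx : x ⬝ᵥ (Q *ᵥ x) = μ := by
    rw [hxeig, dotProduct_smul, hxx, smul_eq_mul, mul_one]
  have hyQy_ge : μ ≤ y ⬝ᵥ (Q *ᵥ y) := by
    rw [← hxQx, dot_mulVec_expand, dot_mulVec_expand]
    refine Finset.sum_le_sum fun i _ => Finset.sum_le_sum fun j _ => ?_
    calc Q i j * x i * x j ≤ |Q i j * x i * x j| := le_abs_self _
      _ = Q i j * y i * y j := by
          rw [abs_mul, abs_mul, abs_of_nonneg (qdMatrix_nonneg G i j)]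
  have hyQy_le : y ⬝ᵥ (Q *ᵥ y) ≤ μ := by
    have := rayleigh_le hQh hall y
    rwa [hyy, mul_one] at this
  have hyQy : y ⬝ᵥ (Q *ᵥ y) = μ := le_antisymm hyQy_le hyQy_ge
  -- y is an eigenvector: μ • 1 - Q is PSD and y ⬝ ((μ•1-Q) y) = 0
  have hP : (μ • (1 : Matrix V V ℝ) - Q).PosSemidef := by
    refine Matrix.PosSemidef.of_dotProduct_mulVec_nonneg ?_ ?_
    · show (μ • (1 : Matrix V V ℝ) - Q)ᴴ = _
      rw [Matrix.conjTranspose_sub, Matrix.conjTranspose_smul, Matrix.conjTranspose_one,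
        star_trivial, hQh.eq]
    · intro w
      have h1 : (μ • (1 : Matrix V V ℝ) - Q) *ᵥ w = μ • w - Q *ᵥ w := by
        rw [Matrix.sub_mulVec, Matrix.smul_mulVec, Matrix.one_mulVec]
      rw [h1, star_trivial, dotProduct_sub, dotProduct_smul, smul_eq_mul, sub_nonneg]
      exact rayleigh_le hQh hall w
  have hyeig : Q *ᵥ y = μ • y := by
    have h0 : star y ⬝ᵥ ((μ • (1 : Matrix V V ℝ) - Q) *ᵥ y) = 0 := by
      have h1 : (μ • (1 : Matrix V V ℝ) - Q) *ᵥ y = μ • y - Q *ᵥ y := by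
        rw [Matrix.sub_mulVec, Matrix.smul_mulVec, Matrix.one_mulVec]
      rw [star_trivial, h1, dotProduct_sub, dotProduct_smul, smul_eq_mul, hyy,
        mul_one, hyQy, sub_self]
    have := (hP.dotProduct_mulVec_zero_iff y).mp h0
    have h1 : (μ • (1 : Matrix V V ℝ) - Q) *ᵥ y = μ • y - Q *ᵥ y := by
      rw [Matrix.sub_mulVec, Matrix.smul_mulVec, Matrix.one_mulVec]
    rw [h1, sub_eq_zero] at this
    exact this.symm
  -- positivity of y
  have hynonneg : ∀ i, 0 ≤ y i := fun i => abs_nonneg _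
  obtain ⟨k, hk⟩ : ∃ k, 0 < y k := by
    by_contra h
    push_neg at h
    have : ∀ i, y i = 0 := fun i => le_antisymm (h i) (hynonneg i)
    have : y ⬝ᵥ y = 0 := by simp [dotProduct, this]
    rw [hyy] at this; norm_num at this
  have hoffdiag : ∀ a b : V, a ≠ b → 0 < Q a b := by
    intro a b hab
    rw [hQdef, qdMatrix_apply, if_neg hab, zero_add]
    exact_mod_cast hG.pos_dist_of_ne hab
  have hdiagpos : ∀ a : V, 0 < Q a a := by
    intro a
    rw [hQdef, qdMatrix_apply, if_pos rfl]
    have : 0 < transmission G a := by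
      have hm : ∃ m : V, m ≠ a := by
        by_cases h : u = a
        · exact ⟨v, fun hv => hne (h.trans hv.symm)⟩
        · exact ⟨u, h⟩
      obtain ⟨m, hm⟩ := hm
      have : 0 < G.dist a m := hG.pos_dist_of_ne (Ne.symm hm)
      calc 0 < G.dist a m := this
        _ ≤ ∑ w, G.dist a w := Finset.single_le_sum (fun w _ => Nat.zero_le _) (Finset.mem_univ m)
    have : (0 : ℝ) < transmission G a := by exact_mod_cast this
    linarith [SimpleGraph.dist_self (G := G) (v := a), this]
  have hμpos : 0 < μ := by
    rw [← hyQy, dot_mulVec_expand]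
    have hterm : 0 < Q k k * y k * y k := by
      have := hdiagpos k
      positivity
    refine Finset.sum_pos' (fun i _ => Finset.sum_nonneg fun j _ => ?_) ⟨k, Finset.mem_univ k, ?_⟩
    · have h1 : 0 ≤ Q i j := qdMatrix_nonneg G i j
      have := hynonneg i; have := hynonneg j
      positivity
    · refine Finset.sum_pos' (fun j _ => ?_) ⟨k, Finset.mem_univ k, hterm⟩
      have h1 : 0 ≤ Q k j := qdMatrix_nonneg G k j
      have := hynonneg k; have := hynonneg j
      positivity
  have hypos : ∀ w, 0 < y w := by
    intro w
    by_cases hwk : w = k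
    · exact hwk ▸ hk
    · have h1 : μ * y w = ∑ j, Q w j * y j := by
        have := congrFun hyeig w
        simp only [Pi.smul_apply, smul_eq_mul] at this
        rw [← this]
        simp [Matrix.mulVec, dotProduct]
      have h2 : 0 < ∑ j, Q w j * y j := by
        refine Finset.sum_pos' (fun j _ => mul_nonneg (qdMatrix_nonneg G w j) (hynonneg j))
          ⟨k, Finset.mem_univ k, mul_pos (hoffdiag w k hwk) hk⟩
      have h3 : 0 < μ * y w := h1 ▸ h2
      by_contra hcon
      push_neg at hcon
      nlinarith
  have hentry : ∀ i j, Q i j ≤ Q' i j := by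
    intro i j
    show qdMatrix G i j ≤ qdMatrix G' i j
    rw [qdMatrix_apply, qdMatrix_apply]
    have h1 : (G.dist i j : ℝ) ≤ G'.dist i j := by exact_mod_cast hd i j
    have h2 : (if i = j then (transmission G i : ℝ) else 0) ≤
        (if i = j then (transmission G' i : ℝ) else 0) := by
      split
      · exact_mod_cast htr i
      · exact le_refl 0
    linarith
  have hup : y ⬝ᵥ (Q' *ᵥ y) ≤ maxEig Q' := by
    have := rayleigh_le hQ'h hall' y
    rwa [hyy, mul_one] at this
  have hterm_le : ∀ i j : V, Q i j * y i * y j ≤ Q' i j * y i * y j := fun i j =>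
    mul_le_mul_of_nonneg_right (mul_le_mul_of_nonneg_right (hentry i j) (hynonneg i)) (hynonneg j)
  have hstrict : y ⬝ᵥ (Q *ᵥ y) < y ⬝ᵥ (Q' *ᵥ y) := by
    rw [dot_mulVec_expand, dot_mulVec_expand]
    refine Finset.sum_lt_sum (fun i _ => Finset.sum_le_sum fun j _ => hterm_le i j)
      ⟨u, Finset.mem_univ u, ?_⟩
    refine Finset.sum_lt_sum (fun j _ => hterm_le u j) ⟨v, Finset.mem_univ v, ?_⟩
    have h1 : Q u v = 1 := by
      show qdMatrix G u v = 1
      rw [qdMatrix_apply, if_neg hne, hdist1]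
      norm_num
    have h2 : (2 : ℝ) ≤ Q' u v := by
      show (2 : ℝ) ≤ qdMatrix G' u v
      rw [qdMatrix_apply, if_neg hne]
      have h3 : (2 : ℝ) ≤ (G'.dist u v : ℝ) := by exact_mod_cast hd'2
      linarith
    have h4 : 0 < y u * y v := mul_pos (hypos u) (hypos v)
    rw [h1]
    nlinarith
  calc μ = y ⬝ᵥ (Q *ᵥ y) := hyQy.symm
    _ < y ⬝ᵥ (Q' *ᵥ y) := hstrict
    _ ≤ maxEig Q' := hup
end

section
/- The graph G' = K_δ ∨ (K_{n-(b+1)δ+bk-1} ∪ (bδ-bk+1)K₁) (with n ≥ (b+1)δ - bk + 2, b odd, n ≡ k (mod 2), δ ≥ k+1) is not k-critical with respect to [1,b]-odd factors. -/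
open SimpleGraph

/-- The graph `K_a ∨ (K_m ∪ t•K₁)` on `Fin (a + m + t)`: the first `a` vertices
form a dominating clique, the next `m` a clique, the last `t` an independent set. -/
def jGraph (a m t : ℕ) : SimpleGraph (Fin (a + m + t)) :=
  SimpleGraph.fromRel (fun i j => i.val < a ∨ (i.val < a + m ∧ j.val < a + m))

theorem stmt_11 (b k δ n m t : ℕ) (hb : 0 < b) (hk : 0 < k) (hδ : 0 < δ) (hn : 0 < n)
    (hbodd : b % 2 = 1) (hpar : n % 2 = k % 2) (hδk : k + 1 ≤ δ)
    (hm : (m : ℤ) = (n : ℤ) - (b + 1) * δ + b * k - 1)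
    (ht : (t : ℤ) = (b : ℤ) * δ - b * k + 1)
    (hm1 : 1 ≤ m) (ht1 : 1 ≤ t)
    (hnbig : ((b : ℤ) + 1) * δ - b * k + 2 ≤ n) :
    ¬ KCriticalOdd (jGraph δ m t) k b := by
  classical
  intro hcrit
  have hkδ : k < δ := hδk
  set X : Finset (Fin (δ + m + t)) := Finset.univ.filter (fun v => v.val < k) with hX
  have hmemX : ∀ v : Fin (δ + m + t), v ∈ X ↔ v.val < k := by
    intro v; simp [hX]
  have hXcard : X.card = k := by
    rw [show k = (Finset.range k).card from (Finset.card_range k).symm]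
    apply Finset.card_bij (fun v _ => v.val)
    · intro a ha; simpa using (hmemX a).1 ha
    · intro a _ b _ h; exact Fin.val_injective h
    · intro j hj
      have hjk : j < k := Finset.mem_range.1 hj
      refine ⟨⟨j, by omega⟩, ?_, rfl⟩
      exact (hmemX _).2 hjk
  obtain ⟨H, hHle, hH⟩ := hcrit X hXcard
  -- vertices of the induced graph
  have hge : ∀ v : ((Xᶜ : Finset (Fin (δ + m + t))) : Set (Fin (δ + m + t))),
      k ≤ (v : Fin (δ + m + t)).val := by
    intro v
    have h2 := v.2
    rw [Finset.mem_coe, Finset.mem_compl] at h2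
    by_contra hc
    exact h2 ((hmemX _).2 (by omega))
  set I' : Finset ((Xᶜ : Finset (Fin (δ + m + t))) : Set (Fin (δ + m + t))) :=
    Finset.univ.filter (fun v => δ + m ≤ (v : Fin (δ + m + t)).val) with hI
  set D' : Finset ((Xᶜ : Finset (Fin (δ + m + t))) : Set (Fin (δ + m + t))) :=
    Finset.univ.filter (fun v => (v : Fin (δ + m + t)).val < δ) with hD
  -- every vertex has an H-neighbor
  have hex : ∀ w : ((Xᶜ : Finset (Fin (δ + m + t))) : Set (Fin (δ + m + t))),
      ∃ u, H.Adj w u := by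
    intro w
    have hodd := (hH w).1
    have hpos : 0 < degN H w := hodd.pos
    rw [degN] at hpos
    obtain ⟨hne, -⟩ := Nat.card_pos_iff.mp hpos
    obtain ⟨u, hu⟩ := hne
    exact ⟨u, hu⟩
  set f : ((Xᶜ : Finset (Fin (δ + m + t))) : Set (Fin (δ + m + t))) →
      ((Xᶜ : Finset (Fin (δ + m + t))) : Set (Fin (δ + m + t))) :=
    fun w => (hex w).choose with hf
  have hfadj : ∀ w, H.Adj w (f w) := fun w => (hex w).choose_spec
  -- f maps I' to D'
  have hmaps : ∀ w ∈ I', f w ∈ D' := by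
    intro w hw
    have hwv : δ + m ≤ (w : Fin (δ + m + t)).val := by
      simpa [hI] using hw
    have hadj : ((jGraph δ m t).induce _).Adj w (f w) := hHle (hfadj w)
    have hadj' : (jGraph δ m t).Adj (w : Fin (δ + m + t)) ((f w : Fin (δ + m + t))) := by
      simpa using hadj
    rw [jGraph, SimpleGraph.fromRel_adj] at hadj'
    obtain ⟨-, h1 | h2⟩ := hadj'
    · exact absurd h1 (by omega)
    · simp only [hD, Finset.mem_filter, Finset.mem_univ, true_and]
      omega
  -- fibers of f over D' are small
  have hfiber : ∀ d ∈ D', (I'.filter (fun w => f w = d)).card ≤ b := by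
    intro d _
    have hsub : I'.filter (fun w => f w = d) ⊆
        Finset.univ.filter (fun u => H.Adj d u) := by
      intro w hw
      rw [Finset.mem_filter] at hw ⊢
      refine ⟨Finset.mem_univ _, ?_⟩
      have := hfadj w
      rw [hw.2] at this
      exact this.symm
    have hcardeq : degN H d = (Finset.univ.filter (fun u => H.Adj d u)).card := by
      rw [degN, Nat.card_eq_fintype_card]
      exact Fintype.card_subtype _
    calc (I'.filter (fun w => f w = d)).card
        ≤ (Finset.univ.filter (fun u => H.Adj d u)).card := Finset.card_le_card hsub
      _ = degN H d := hcardeq.symm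
      _ ≤ b := (hH d).2
  have hmain : I'.card ≤ b * D'.card :=
    Finset.card_le_mul_card_image_of_maps_to hmaps b hfiber
  -- |I'| ≥ t
  have hIcard : t ≤ I'.card := by
    have hsurj : Set.SurjOn (fun v : ((Xᶜ : Finset (Fin (δ + m + t))) : Set (Fin (δ + m + t))) =>
        (v : Fin (δ + m + t)).val) ↑I' ↑(Finset.Ico (δ + m) (δ + m + t)) := by
      intro j hj
      rw [Finset.coe_Ico, Set.mem_Ico] at hj
      refine ⟨⟨⟨j, by omega⟩, ?_⟩, ?_, rfl⟩
      · simp only [Finset.mem_coe, Finset.mem_compl, hmemX, Fin.val_mk]; omega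
      · rw [Finset.mem_coe, hI, Finset.mem_filter]
        refine ⟨Finset.mem_univ _, ?_⟩
        simp only [Fin.val_mk]
        exact hj.1
    have := Finset.card_le_card_of_surjOn _ hsurj
    simpa using this
  -- |D'| ≤ δ - k
  have hDcard : D'.card ≤ δ - k := by
    have hinj : D'.card ≤ (Finset.Ico k δ).card := by
      apply Finset.card_le_card_of_injOn
        (fun v : ((Xᶜ : Finset (Fin (δ + m + t))) : Set (Fin (δ + m + t))) =>
          (v : Fin (δ + m + t)).val)
      · intro v hv
        have hv' : (v : Fin (δ + m + t)).val < δ := by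
          have := hv; rw [Finset.mem_coe, hD, Finset.mem_filter] at this; exact this.2
        rw [Finset.mem_coe, Finset.mem_Ico]
        exact ⟨hge v, hv'⟩
      · intro v _ w _ hvw
        exact Subtype.ext (Fin.ext hvw)
    simpa using hinj
  have h1 : t ≤ b * (δ - k) :=
    le_trans hIcard (le_trans hmain (Nat.mul_le_mul_left b hDcard))
  have h2 : (t : ℤ) ≤ (b : ℤ) * ((δ : ℤ) - k) := by
    calc (t : ℤ) ≤ ((b * (δ - k) : ℕ) : ℤ) := by exact_mod_cast h1
      _ = (b : ℤ) * ((δ : ℤ) - k) := by push_cast [Nat.cast_sub hkδ.le]; ring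
  have h3 : (b : ℤ) * ((δ : ℤ) - k) = (b : ℤ) * δ - b * k := by ring
  linarith
end

section
/- Let b, δ, k, n be positive integers with δ ≥ k+1, b ≥ k, k ≥ 1, and n ≥ 2(b²+2b)δ² + 2δ + 2b²k². Then for G' = K_δ ∨ (K_{n-(b+1)δ+bk-1} ∪ (bδ-bk+1)K₁) one has η₁(G') > 2n + 4bδ - 4bk + 1. -/
open SimpleGraph

/-- The Wiener index: the sum of distances over unordered pairs. -/
noncomputable def wiener {V : Type*} [Fintype V] (G : SimpleGraph V) : ℝ :=
  (1 / 2 : ℝ) * ∑ i, ∑ j, (G.dist i j : ℝ)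

section Aux

open Matrix

/-- Rayleigh-type bound: for a real symmetric matrix, quadratic forms are bounded
by the largest eigenvalue times the squared norm. -/
lemma rayleigh_le_maxEig {N : ℕ} (M : Matrix (Fin N) (Fin N) ℝ)
    (hM : M.IsHermitian) (x : Fin N → ℝ) :
    x ⬝ᵥ (M *ᵥ x) ≤ maxEig M * (x ⬝ᵥ x) := by
  have hspec : spectrum ℝ M = Set.range hM.eigenvalues := hM.spectrum_real_eq_range_eigenvalues
  have hle : ∀ i, hM.eigenvalues i ≤ maxEig M := fun i =>
    le_csSup (by rw [hspec]; exact (Set.finite_range _).bddAbove)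
      (hM.eigenvalues_mem_spectrum_real i)
  set U : Matrix (Fin N) (Fin N) ℝ := (hM.eigenvectorUnitary : Matrix (Fin N) (Fin N) ℝ) with hUdef
  have hstar : star U = Uᵀ := by
    rw [star_eq_conjTranspose, conjTranspose_eq_transpose_of_trivial]
  have hUU : U * Uᵀ = 1 := by
    rw [← hstar]; exact Unitary.mul_star_self_of_mem hM.eigenvectorUnitary.2
  set y : Fin N → ℝ := x ᵥ* U with hy
  have hxy : x ⬝ᵥ x = y ⬝ᵥ y := by
    rw [hy, ← dotProduct_mulVec, ← mulVec_transpose, mulVec_mulVec, hUU, one_mulVec]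
  have hMx : x ⬝ᵥ (M *ᵥ x) = ∑ i, y i * (hM.eigenvalues i * y i) := by
    conv_lhs => rw [hM.spectral_theorem, Unitary.conjStarAlgAut_apply, ← hUdef]
    rw [hstar, ← mulVec_mulVec, ← mulVec_mulVec, dotProduct_mulVec, mulVec_transpose, ← hy]
    simp [dotProduct, mulVec_diagonal]
  rw [hMx, hxy, dotProduct, Finset.mul_sum]
  apply Finset.sum_le_sum
  intro i _
  have := hle i
  nlinarith [sq_nonneg (y i)]

lemma jGraph_adj (a m t : ℕ) (i j : Fin (a + m + t)) :
    (jGraph a m t).Adj i j ↔ i ≠ j ∧ (i.val < a ∨ j.val < a ∨ (i.val < a + m ∧ j.val < a + m)) := by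
  simp only [jGraph, fromRel_adj]
  constructor
  · rintro ⟨h1, h2⟩; exact ⟨h1, by tauto⟩
  · rintro ⟨h1, h2⟩; exact ⟨h1, by tauto⟩

open Classical in
lemma jGraph_dist (a m t : ℕ) (ha : 0 < a) (i j : Fin (a + m + t)) :
    (jGraph a m t).dist i j =
      if i = j then 0 else if (jGraph a m t).Adj i j then 1 else 2 := by
  classical
  split_ifs with h1 h2
  · subst h1; exact dist_self
  · exact (dist_eq_one_iff_adj).2 h2
  · have hi : a ≤ i.val := by
      by_contra h
      exact h2 ((jGraph_adj a m t i j).2 ⟨h1, Or.inl (by omega)⟩)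
    have hj : a ≤ j.val := by
      by_contra h
      exact h2 ((jGraph_adj a m t i j).2 ⟨h1, Or.inr (Or.inl (by omega))⟩)
    have hN : 0 < a + m + t := by omega
    set w : Fin (a + m + t) := ⟨0, hN⟩ with hw
    have hwi : (jGraph a m t).Adj i w := by
      rw [jGraph_adj]
      refine ⟨fun h => ?_, Or.inr (Or.inl (by simp [hw]; omega))⟩
      · have := congrArg Fin.val h; simp [hw] at this; omega
    have hwj : (jGraph a m t).Adj w j := by
      rw [jGraph_adj]
      refine ⟨fun h => ?_, Or.inl (by simp [hw]; omega)⟩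
      · have := congrArg Fin.val h; simp [hw] at this; omega
    have hwalk : (jGraph a m t).dist i j ≤ 2 := by
      have := dist_le (hwi.toWalk.append hwj.toWalk)
      simp [SimpleGraph.Walk.length_append] at this
      omega
    have hreach : (jGraph a m t).Reachable i j := ⟨hwi.toWalk.append hwj.toWalk⟩
    have h0 : 0 < (jGraph a m t).dist i j := hreach.pos_dist_of_ne h1
    have hne1 : (jGraph a m t).dist i j ≠ 1 := fun h => h2 (dist_eq_one_iff_adj.1 h)
    omega

noncomputable def gfun (δ m : ℕ) (x y : ℕ) : ℝ :=
  if x = y then 0 else if (x < δ ∨ y < δ ∨ (x < δ + m ∧ y < δ + m)) then 1 else 2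
noncomputable def pfun (δ : ℕ) (x : ℕ) : ℝ := if δ ≤ x then 1 else 0
noncomputable def qfun (δ m : ℕ) (x : ℕ) : ℝ := if δ + m ≤ x then 1 else 0
noncomputable def efun (x y : ℕ) : ℝ := if x = y then 1 else 0

lemma gfun_eq (δ m : ℕ) (x y : ℕ) :
    gfun δ m x y = 1 - efun x y + (pfun δ x * qfun δ m x) * pfun δ y
      + pfun δ x * (pfun δ y * qfun δ m y)
      - (pfun δ x * qfun δ m x) * (pfun δ y * qfun δ m y) - efun x y * qfun δ m x := by
  unfold gfun pfun qfun efun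
  split_ifs <;> first | (exfalso; omega) | norm_num

lemma sum_pfun (δ m t : ℕ) : ∑ x ∈ Finset.range (δ + m + t), pfun δ x = (m + t : ℝ) := by
  unfold pfun
  rw [Finset.sum_boole]
  have h : (Finset.range (δ + m + t)).filter (fun x => δ ≤ x) = Finset.Ico δ (δ + m + t) := by
    ext x; simp [Finset.mem_Ico, Finset.mem_range]; omega
  rw [h, Nat.card_Ico]
  have h2 : δ + m + t - δ = m + t := by omega
  rw [h2]
  push_cast
  ring

lemma sum_pqfun (δ m t : ℕ) :
    ∑ x ∈ Finset.range (δ + m + t), pfun δ x * qfun δ m x = (t : ℝ) := by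
  have h : ∀ x, pfun δ x * qfun δ m x = qfun δ m x := by
    intro x; unfold pfun qfun; split_ifs <;> first | (exfalso; omega) | norm_num
  simp only [h]
  unfold qfun
  rw [Finset.sum_boole]
  have h2 : (Finset.range (δ + m + t)).filter (fun x => δ + m ≤ x) = Finset.Ico (δ + m) (δ + m + t) := by
    ext x; simp [Finset.mem_Ico, Finset.mem_range]; omega
  rw [h2]
  simp [Nat.card_Ico]

lemma sum_qfun (δ m t : ℕ) : ∑ x ∈ Finset.range (δ + m + t), qfun δ m x = (t : ℝ) := by
  have h := sum_pqfun δ m t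
  have h1 : ∀ x, pfun δ x * qfun δ m x = qfun δ m x := by
    intro x; unfold pfun qfun; split_ifs <;> first | (exfalso; omega) | norm_num
  simp only [h1] at h
  exact h

lemma sum_gfun (δ m t : ℕ) :
    ∑ x ∈ Finset.range (δ + m + t), ∑ y ∈ Finset.range (δ + m + t), gfun δ m x y
      = ((δ + m + t : ℕ) : ℝ) ^ 2 - ((δ + m + t : ℕ) : ℝ) + 2 * m * t + t ^ 2 - t := by
  have he : ∀ x ∈ Finset.range (δ + m + t), ∑ y ∈ Finset.range (δ + m + t), efun x y = 1 := by
    intro x hx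
    unfold efun
    rw [Finset.sum_ite_eq (Finset.range (δ + m + t)) x (fun _ => (1:ℝ))]
    simp [Finset.mem_range.1 hx]
  calc ∑ x ∈ Finset.range (δ + m + t), ∑ y ∈ Finset.range (δ + m + t), gfun δ m x y
      = ∑ x ∈ Finset.range (δ + m + t), ∑ y ∈ Finset.range (δ + m + t),
          (1 - efun x y + (pfun δ x * qfun δ m x) * pfun δ y
            + pfun δ x * (pfun δ y * qfun δ m y)
            - (pfun δ x * qfun δ m x) * (pfun δ y * qfun δ m y) - efun x y * qfun δ m x) := by
        exact Finset.sum_congr rfl fun x _ => Finset.sum_congr rfl fun y _ => gfun_eq δ m x y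
    _ = ∑ x ∈ Finset.range (δ + m + t),
          (((δ + m + t : ℕ) : ℝ) - (∑ y ∈ Finset.range (δ + m + t), efun x y)
            + (pfun δ x * qfun δ m x) * (∑ y ∈ Finset.range (δ + m + t), pfun δ y)
            + pfun δ x * (∑ y ∈ Finset.range (δ + m + t), pfun δ y * qfun δ m y)
            - (pfun δ x * qfun δ m x) * (∑ y ∈ Finset.range (δ + m + t), pfun δ y * qfun δ m y)
            - (∑ y ∈ Finset.range (δ + m + t), efun x y) * qfun δ m x) := by
        refine Finset.sum_congr rfl fun x _ => ?_
        simp only [Finset.sum_add_distrib, Finset.sum_sub_distrib, ← Finset.mul_sum,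
          ← Finset.sum_mul, Finset.sum_const, Finset.card_range, nsmul_eq_mul, mul_one]
    _ = ∑ x ∈ Finset.range (δ + m + t),
          (((δ + m + t : ℕ) : ℝ) - 1
            + (pfun δ x * qfun δ m x) * ((m : ℝ) + t)
            + pfun δ x * (t : ℝ)
            - (pfun δ x * qfun δ m x) * (t : ℝ)
            - qfun δ m x) := by
        refine Finset.sum_congr rfl fun x hx => ?_
        rw [he x hx, sum_pfun, sum_pqfun, one_mul]
    _ = ((δ + m + t : ℕ) : ℝ) ^ 2 - ((δ + m + t : ℕ) : ℝ) + 2 * m * t + t ^ 2 - t := by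
        simp only [Finset.sum_add_distrib, Finset.sum_sub_distrib, ← Finset.sum_mul,
          Finset.sum_const, Finset.card_range, nsmul_eq_mul]
        rw [sum_pfun, sum_pqfun, sum_qfun]
        push_cast
        ring

lemma dist_cast_eq_gfun (δ m t : ℕ) (hδ : 0 < δ) (i j : Fin (δ + m + t)) :
    (((jGraph δ m t).dist i j : ℕ) : ℝ) = gfun δ m i.val j.val := by
  classical
  rw [jGraph_dist δ m t hδ]
  unfold gfun
  by_cases h1 : i = j
  · simp [h1]
  · have hv : ¬ i.val = j.val := fun h => h1 (Fin.ext h)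
    by_cases h2 : (jGraph δ m t).Adj i j
    · have hc := ((jGraph_adj δ m t i j).1 h2).2
      simp [h1, hv, h2, hc]
    · have hcond : ¬(i.val < δ ∨ j.val < δ ∨ (i.val < δ + m ∧ j.val < δ + m)) :=
        fun hc => h2 ((jGraph_adj δ m t i j).2 ⟨h1, hc⟩)
      simp [h1, hv, h2, hcond]

lemma sum_dist_jGraph (δ m t : ℕ) (hδ : 0 < δ) :
    ∑ i : Fin (δ + m + t), ∑ j : Fin (δ + m + t), (((jGraph δ m t).dist i j : ℕ) : ℝ)
      = ((δ + m + t : ℕ) : ℝ) ^ 2 - ((δ + m + t : ℕ) : ℝ) + 2 * m * t + t ^ 2 - t := by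
  have h : ∀ i : Fin (δ + m + t),
      ∑ j : Fin (δ + m + t), (((jGraph δ m t).dist i j : ℕ) : ℝ)
        = ∑ y ∈ Finset.range (δ + m + t), gfun δ m i.val y := by
    intro i
    rw [← Fin.sum_univ_eq_sum_range (fun y => gfun δ m i.val y)]
    exact Finset.sum_congr rfl fun j _ => dist_cast_eq_gfun δ m t hδ i j
  calc ∑ i : Fin (δ + m + t), ∑ j : Fin (δ + m + t), (((jGraph δ m t).dist i j : ℕ) : ℝ)
      = ∑ i : Fin (δ + m + t), ∑ y ∈ Finset.range (δ + m + t), gfun δ m i.val y :=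
        Finset.sum_congr rfl fun i _ => h i
    _ = ∑ x ∈ Finset.range (δ + m + t), ∑ y ∈ Finset.range (δ + m + t), gfun δ m x y :=
        Fin.sum_univ_eq_sum_range (fun x => ∑ y ∈ Finset.range (δ + m + t), gfun δ m x y) _
    _ = ((δ + m + t : ℕ) : ℝ) ^ 2 - ((δ + m + t : ℕ) : ℝ) + 2 * m * t + t ^ 2 - t :=
        sum_gfun δ m t

end Aux

set_option maxHeartbeats 1000000 in
theorem stmt_14 (b k δ n m t : ℕ) (hb : 0 < b) (hk : 0 < k) (hδ : 0 < δ) (hn : 0 < n)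
    (hδk : k + 1 ≤ δ) (hbk : k ≤ b)
    (hm : (m : ℤ) = (n : ℤ) - (b + 1) * δ + b * k - 1)
    (ht : (t : ℤ) = (b : ℤ) * δ - b * k + 1)
    (hm1 : 1 ≤ m) (ht1 : 1 ≤ t)
    (hnbig : 2 * ((b : ℤ) ^ 2 + 2 * b) * δ ^ 2 + 2 * δ + 2 * b ^ 2 * k ^ 2 ≤ n) :
    2 * (n : ℝ) + 4 * b * δ - 4 * b * k + 1 < maxEig (qdMatrix (jGraph δ m t)) := by
  classical
  have hmnt : (m : ℤ) = (n : ℤ) - δ - t := by linear_combination hm + ht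
  have hNn : δ + m + t = n := by
    have h0 : ((δ + m + t : ℕ) : ℤ) = (n : ℤ) := by push_cast; linarith [hmnt]
    exact_mod_cast h0
  have hS : ∑ i : Fin (δ + m + t), ∑ j : Fin (δ + m + t), (((jGraph δ m t).dist i j : ℕ) : ℝ)
      = ((δ + m + t : ℕ) : ℝ) ^ 2 - ((δ + m + t : ℕ) : ℝ) + 2 * m * t + t ^ 2 - t :=
    sum_dist_jGraph δ m t hδ
  have hherm : (qdMatrix (jGraph δ m t)).IsHermitian := by
    unfold qdMatrix
    apply Matrix.IsHermitian.add
    · exact Matrix.isHermitian_diagonal _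
    · unfold Matrix.IsHermitian
      ext i j
      simp [distMatrix, Matrix.conjTranspose_apply, SimpleGraph.dist_comm]
  have hQrow : ∀ i : Fin (δ + m + t), ∑ j, qdMatrix (jGraph δ m t) i j
      = ((transmission (jGraph δ m t) i : ℕ) : ℝ)
        + ∑ j, (((jGraph δ m t).dist i j : ℕ) : ℝ) := by
    intro i
    simp only [qdMatrix, Matrix.add_apply, Finset.sum_add_distrib]
    congr 1
    simp [Matrix.diagonal_apply, Finset.sum_ite_eq]
  have htr : ∀ i : Fin (δ + m + t), ((transmission (jGraph δ m t) i : ℕ) : ℝ)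
      = ∑ j, (((jGraph δ m t).dist i j : ℕ) : ℝ) := by
    intro i
    simp [transmission]
  have hQsum : ∑ i : Fin (δ + m + t), ∑ j, qdMatrix (jGraph δ m t) i j
      = 2 * (∑ i : Fin (δ + m + t), ∑ j, (((jGraph δ m t).dist i j : ℕ) : ℝ)) := by
    rw [Finset.sum_congr rfl fun i _ => hQrow i, Finset.sum_add_distrib,
      Finset.sum_congr rfl fun i _ => htr i]
    ring
  have hray := rayleigh_le_maxEig (qdMatrix (jGraph δ m t)) hherm (fun _ => (1 : ℝ))
  have h1 : dotProduct (fun _ : Fin (δ + m + t) => (1:ℝ))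
      ((qdMatrix (jGraph δ m t)).mulVec (fun _ => (1:ℝ)))
      = ∑ i : Fin (δ + m + t), ∑ j, qdMatrix (jGraph δ m t) i j := by
    simp [dotProduct, Matrix.mulVec]
  have h2 : dotProduct (fun _ : Fin (δ + m + t) => (1:ℝ)) (fun _ => (1:ℝ))
      = ((δ + m + t : ℕ) : ℝ) := by
    simp [dotProduct]
  rw [h1, h2] at hray
  have hray2 : 2 * (((δ + m + t : ℕ) : ℝ) ^ 2 - ((δ + m + t : ℕ) : ℝ) + 2 * m * t + t ^ 2 - t)
      ≤ maxEig (qdMatrix (jGraph δ m t)) * ((δ + m + t : ℕ) : ℝ) := by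
    rw [hQsum, hS] at hray
    exact hray
  have hb' : (1 : ℤ) ≤ b := by exact_mod_cast hb
  have hk' : (1 : ℤ) ≤ k := by exact_mod_cast hk
  have hδ' : (k : ℤ) + 1 ≤ δ := by exact_mod_cast hδk
  have hbk' : (k : ℤ) ≤ b := by exact_mod_cast hbk
  have hbk1 : (1 : ℤ) ≤ (b : ℤ) * k := by nlinarith
  have h2bk : (0 : ℤ) ≤ 2 * (b : ℤ) * k - b - 1 := by
    nlinarith [mul_nonneg (by linarith : (0:ℤ) ≤ (b:ℤ)) (by linarith : (0:ℤ) ≤ (k:ℤ) - 1)]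
  have harith : 4 * (t : ℤ) * δ + 2 * t ^ 2 + 2 * t < (n : ℤ) := by
    have hA : (0:ℤ) ≤ ((b:ℤ) * k - 1) * ((b:ℤ) * δ) :=
      mul_nonneg (by linarith) (by positivity)
    have hB : (0:ℤ) ≤ (2 * (b : ℤ) * k - b - 1) * δ :=
      mul_nonneg h2bk (by positivity)
    have e0 : (2 * ((b : ℤ) ^ 2 + 2 * b) * δ ^ 2 + 2 * δ + 2 * b ^ 2 * k ^ 2)
        - (4 * (t : ℤ) * δ + 2 * t ^ 2 + 2 * t)
        = 4 * (((b:ℤ) * k - 1) * ((b:ℤ) * δ)) + 2 * ((2 * (b : ℤ) * k - b - 1) * δ)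
          + (6 * (b:ℤ) * k - 4) := by
      linear_combination (-4 * (δ:ℤ) - 2 * ((t:ℤ) + ((b:ℤ) * δ - (b:ℤ) * k + 1)) - 2) * ht
    linarith [hA, hB, hbk1, hnbig, e0]
  have e1 : 2 * (((n:ℤ)) ^ 2 - n + 2 * m * t + t ^ 2 - t)
      - (n : ℤ) * (2 * n + 4 * b * δ - 4 * b * k + 1)
      = (n : ℤ) - 4 * t * δ - 2 * t ^ 2 - 2 * t := by
    linear_combination (4 * (t : ℤ)) * hmnt + (4 * (n : ℤ)) * ht
  have hZ : (n : ℤ) * (2 * n + 4 * b * δ - 4 * b * k + 1)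
      < 2 * (((n:ℤ)) ^ 2 - n + 2 * m * t + t ^ 2 - t) := by linarith
  have hR : (n : ℝ) * (2 * (n:ℝ) + 4 * b * δ - 4 * b * k + 1)
      < 2 * (((n:ℝ)) ^ 2 - (n:ℝ) + 2 * m * t + t ^ 2 - t) := by exact_mod_cast hZ
  have hNcast : ((δ + m + t : ℕ) : ℝ) = (n : ℝ) := by rw [hNn]
  rw [hNcast] at hray2
  have hnpos : (0 : ℝ) < (n : ℝ) := by exact_mod_cast hn
  have hfinal : (2 * (n : ℝ) + 4 * b * δ - 4 * b * k + 1) * (n : ℝ)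
      < maxEig (qdMatrix (jGraph δ m t)) * (n : ℝ) := by nlinarith [hR, hray2]
  exact (mul_lt_mul_iff_of_pos_right hnpos).1 hfinal
end
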